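/- Every 3-dimensional linear subspace V ⊆ ℂ⁶ on which both Σ_{k=0}^{5} x_k and Σ_{k=0}^{5} x_k³ vanish identically equals P_τ for a unique fixed-point-free involution τ of {0,…,5}. Equivalently, the Segre cubic Σ₃ contains exactly 15 planes, namely the Segre planes. -/

import Mathlib

open scoped BigOperators

/-- A fixed-point-free involution of `{0,…,5}`. -/
def FPF (τ : Equiv.Perm (Fin 6)) : Prop :=
  (∀ i, τ (τ i) = i) ∧ ∀ i, τ i ≠ i

/-- The linear subspace `P_τ = {x ∈ ℂ⁶ : x i + x (τ i) = 0 for all i}`. -/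
noncomputable def segrePlane (τ : Equiv.Perm (Fin 6)) : Submodule ℂ (Fin 6 → ℂ) where
  carrier := {x | ∀ i, x i + x (τ i) = 0}
  add_mem' := by
    intro a b ha hb i
    simp only [Pi.add_apply]
    linear_combination ha i + hb i
  zero_mem' := by intro i; simp
  smul_mem' := by
    intro c x hx i
    simp only [Pi.smul_apply, smul_eq_mul]
    linear_combination c * hx i

section SegreAux
open Module


lemma lin_eq_zero {p1 p2 : ℂ} (h : Polynomial.C p1 * Polynomial.X + Polynomial.C p2 = 0) :
    p1 = 0 ∧ p2 = 0 := by
  constructor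
  · have := congrArg (Polynomial.coeff · 1) h
    simpa using this
  · have := congrArg (Polynomial.coeff · 0) h
    simpa using this

lemma bin (p1 p2 q1 q2 r1 r2 : ℂ)
    (h : ∀ s t : ℂ, (p1*s+p2*t)*(q1*s+q2*t)*(r1*s+r2*t) = 0) :
    (p1 = 0 ∧ p2 = 0) ∨ (q1 = 0 ∧ q2 = 0) ∨ (r1 = 0 ∧ r2 = 0) := by
  have hF : (Polynomial.C p1 * Polynomial.X + Polynomial.C p2) *
      ((Polynomial.C q1 * Polynomial.X + Polynomial.C q2) *
       (Polynomial.C r1 * Polynomial.X + Polynomial.C r2)) = 0 := by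
    apply Polynomial.funext
    intro z
    simpa [mul_assoc] using h z 1
  rcases mul_eq_zero.mp hF with h1 | h2
  · exact Or.inl (lin_eq_zero h1)
  · rcases mul_eq_zero.mp h2 with h3 | h4
    · exact Or.inr (Or.inl (lin_eq_zero h3))
    · exact Or.inr (Or.inr (lin_eq_zero h4))

lemma G (u1 u2 v1 v2 w1 w2 : ℂ) (hs1 : u1 + v1 + w1 = 0) (hs2 : u2 + v2 + w2 = -1)
    (h : ∀ s t : ℂ, t^3 + (u1*s+u2*t)^3 + (v1*s+v2*t)^3 + (w1*s+w2*t)^3 = 0) :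
    (w1 = 0 ∧ w2 = -1) ∨ (u1 = 0 ∧ u2 = -1) ∨ (v1 = 0 ∧ v2 = -1) := by
  have key := bin (u1+v1) (u2+v2) (v1+w1) (v2+w2) (w1+u1) (w2+u2) (by
    intro s t
    linear_combination (-(1:ℂ)/3) * h s t
      + ((1:ℂ)/3)*(((u1+v1+w1)*s + (u2+v2+w2)*t)^2 - ((u1+v1+w1)*s + (u2+v2+w2)*t)*t + t^2)*s*hs1
      + ((1:ℂ)/3)*(((u1+v1+w1)*s + (u2+v2+w2)*t)^2 - ((u1+v1+w1)*s + (u2+v2+w2)*t)*t + t^2)*t*(hs2))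
  rcases key with ⟨e1,e2⟩|⟨e1,e2⟩|⟨e1,e2⟩
  · exact Or.inl ⟨by linear_combination hs1 - e1, by linear_combination hs2 - e2⟩
  · exact Or.inr (Or.inl ⟨by linear_combination hs1 - e1, by linear_combination hs2 - e2⟩)
  · exact Or.inr (Or.inr ⟨by linear_combination hs1 - e1, by linear_combination hs2 - e2⟩)

lemma contra (x1 x2 y1 y2 z1 z2 : ℂ) (hx1 : x1 = -1) (hx2 : x2 = -1)
    (h1 : x1 + y1 + z1 = -1) (h2 : x2 + y2 + z2 = -1)
    (hc : 2 + (x1+x2)^3 + (y1+y2)^3 + (z1+z2)^3 = 0) : False := by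
  have he : (z1+z2) = -(y1+y2) := by linear_combination h1 + h2 - hx1 - hx2
  have h6 : (6:ℂ) = 0 := by
    linear_combination -hc + ((x1+x2)^2 - 2*(x1+x2) + 4)*(hx1+hx2)
      + ((y1+y2)^2 - (y1+y2)*(z1+z2) + (z1+z2)^2) * he
  norm_num at h6

lemma good (a1 a2 a3 b1 b2 b3 c1 c2 c3 : ℂ)
    (h1 : a1+b1+c1 = -1) (h2 : a2+b2+c2 = -1) (h3 : a3+b3+c3 = -1)
    (dA : a1 = a2) (dA3 : a3 = -1) (dB : b2 = b3) (dB1 : b1 = -1)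
    (dC : c3 = c1) (dC2 : c2 = -1) :
    a1 = 0 ∧ a2 = 0 ∧ a3 = -1 ∧ b1 = -1 ∧ b2 = 0 ∧ b3 = 0 ∧ c1 = 0 ∧ c2 = -1 ∧ c3 = 0 := by
  have e1 : a1 + c1 = 0 := by linear_combination h1 - dB1
  have e2 : a1 + b2 = 0 := by linear_combination h2 - dC2 + dA
  have e3 : b2 + c1 = 0 := by linear_combination h3 - dA3 + dB - dC
  refine ⟨?_,?_,dA3,dB1,?_,?_,?_,dC2,?_⟩
  · linear_combination ((1:ℂ)/2)*(e1+e2-e3)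
  · linear_combination ((1:ℂ)/2)*(e1+e2-e3) - dA
  · linear_combination ((1:ℂ)/2)*(e3+e2-e1)
  · linear_combination ((1:ℂ)/2)*(e3+e2-e1) - dB
  · linear_combination ((1:ℂ)/2)*(e1+e3-e2)
  · linear_combination ((1:ℂ)/2)*(e1+e3-e2) + dC

lemma key (a1 a2 a3 b1 b2 b3 c1 c2 c3 : ℂ)
    (h1 : a1 + b1 + c1 = -1) (h2 : a2 + b2 + c2 = -1) (h3 : a3 + b3 + c3 = -1)
    (hc : ∀ s t r : ℂ, s^3 + t^3 + r^3 + (a1*s + a2*t + a3*r)^3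
      + (b1*s + b2*t + b3*r)^3 + (c1*s + c2*t + c3*r)^3 = 0) :
    (a1 = -1 ∧ a2 = 0 ∧ a3 = 0 ∧ b1 = 0 ∧ b2 = -1 ∧ b3 = 0 ∧ c1 = 0 ∧ c2 = 0 ∧ c3 = -1) ∨
    (a1 = -1 ∧ a2 = 0 ∧ a3 = 0 ∧ b1 = 0 ∧ b2 = 0 ∧ b3 = -1 ∧ c1 = 0 ∧ c2 = -1 ∧ c3 = 0) ∨
    (a1 = 0 ∧ a2 = -1 ∧ a3 = 0 ∧ b1 = -1 ∧ b2 = 0 ∧ b3 = 0 ∧ c1 = 0 ∧ c2 = 0 ∧ c3 = -1) ∨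
    (a1 = 0 ∧ a2 = -1 ∧ a3 = 0 ∧ b1 = 0 ∧ b2 = 0 ∧ b3 = -1 ∧ c1 = -1 ∧ c2 = 0 ∧ c3 = 0) ∨
    (a1 = 0 ∧ a2 = 0 ∧ a3 = -1 ∧ b1 = -1 ∧ b2 = 0 ∧ b3 = 0 ∧ c1 = 0 ∧ c2 = -1 ∧ c3 = 0) ∨
    (a1 = 0 ∧ a2 = 0 ∧ a3 = -1 ∧ b1 = 0 ∧ b2 = -1 ∧ b3 = 0 ∧ c1 = -1 ∧ c2 = 0 ∧ c3 = 0) := by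
  have D1 : (c1 = c2 ∧ c3 = -1) ∨ (a1 = a2 ∧ a3 = -1) ∨ (b1 = b2 ∧ b3 = -1) := by
    have := G (a1-a2) a3 (b1-b2) b3 (c1-c2) c3
      (by linear_combination h1 - h2) h3
      (fun s t => by linear_combination hc s (-s) t)
    rcases this with ⟨e1,e2⟩|⟨e1,e2⟩|⟨e1,e2⟩
    · exact Or.inl ⟨by linear_combination e1, e2⟩
    · exact Or.inr (Or.inl ⟨by linear_combination e1, e2⟩)
    · exact Or.inr (Or.inr ⟨by linear_combination e1, e2⟩)
  have D2 : (c2 = c3 ∧ c1 = -1) ∨ (a2 = a3 ∧ a1 = -1) ∨ (b2 = b3 ∧ b1 = -1) := by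
    have := G (a2-a3) a1 (b2-b3) b1 (c2-c3) c1
      (by linear_combination h2 - h3) h1
      (fun s t => by linear_combination hc t s (-s))
    rcases this with ⟨e1,e2⟩|⟨e1,e2⟩|⟨e1,e2⟩
    · exact Or.inl ⟨by linear_combination e1, e2⟩
    · exact Or.inr (Or.inl ⟨by linear_combination e1, e2⟩)
    · exact Or.inr (Or.inr ⟨by linear_combination e1, e2⟩)
  have D3 : (c3 = c1 ∧ c2 = -1) ∨ (a3 = a1 ∧ a2 = -1) ∨ (b3 = b1 ∧ b2 = -1) := by
    have := G (a3-a1) a2 (b3-b1) b2 (c3-c1) c2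
      (by linear_combination h3 - h1) h2
      (fun s t => by linear_combination hc (-s) t s)
    rcases this with ⟨e1,e2⟩|⟨e1,e2⟩|⟨e1,e2⟩
    · exact Or.inl ⟨by linear_combination e1, e2⟩
    · exact Or.inr (Or.inl ⟨by linear_combination e1, e2⟩)
    · exact Or.inr (Or.inr ⟨by linear_combination e1, e2⟩)
  have hcA : 2 + (a1+a2)^3 + (b1+b2)^3 + (c1+c2)^3 = 0 := by linear_combination hc 1 1 0
  have hcB : 2 + (b1+b2)^3 + (a1+a2)^3 + (c1+c2)^3 = 0 := by linear_combination hc 1 1 0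
  have hcC : 2 + (c1+c2)^3 + (a1+a2)^3 + (b1+b2)^3 = 0 := by linear_combination hc 1 1 0
  rcases D1 with ⟨p1,p2⟩|⟨p1,p2⟩|⟨p1,p2⟩ <;> rcases D2 with ⟨q1,q2⟩|⟨q1,q2⟩|⟨q1,q2⟩ <;>
    rcases D3 with ⟨r1,r2⟩|⟨r1,r2⟩|⟨r1,r2⟩
  -- 1 (c,c,c) D1D2 c
  · exact (contra c1 c2 a1 a2 b1 b2 q2 (by linear_combination q1 + p2)
      (by linear_combination h1) (by linear_combination h2) hcC).elim
  -- 2 (c,c,a) D1D2 c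
  · exact (contra c1 c2 a1 a2 b1 b2 q2 (by linear_combination q1 + p2)
      (by linear_combination h1) (by linear_combination h2) hcC).elim
  -- 3 (c,c,b) D1D2 c
  · exact (contra c1 c2 a1 a2 b1 b2 q2 (by linear_combination q1 + p2)
      (by linear_combination h1) (by linear_combination h2) hcC).elim
  -- 4 (c,a,c) D1D3 c
  · exact (contra c1 c2 a1 a2 b1 b2 (by linear_combination p2 - r1) r2
      (by linear_combination h1) (by linear_combination h2) hcC).elim
  -- 5 (c,a,a) D2D3 a
  · exact (contra a1 a2 b1 b2 c1 c2 q2 r2 h1 h2 hcA).elim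
  -- 6 (c,a,b) GOOD → disjunct 1
  · obtain ⟨x1,x2,x3,y1,y2,y3,z1,z2,z3⟩ := good c1 c2 c3 a1 a2 a3 b1 b2 b3
      (by linear_combination h1) (by linear_combination h2) (by linear_combination h3)
      p1 p2 q1 q2 r1 r2
    exact Or.inl ⟨y1,y2,y3,z1,z2,z3,x1,x2,x3⟩
  -- 7 (c,b,c) D1D3 c
  · exact (contra c1 c2 a1 a2 b1 b2 (by linear_combination p2 - r1) r2
      (by linear_combination h1) (by linear_combination h2) hcC).elim
  -- 8 (c,b,a) GOOD → disjunct 3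
  · obtain ⟨x1,x2,x3,y1,y2,y3,z1,z2,z3⟩ := good c1 c2 c3 b1 b2 b3 a1 a2 a3
      (by linear_combination h1) (by linear_combination h2) (by linear_combination h3)
      p1 p2 q1 q2 r1 r2
    exact Or.inr (Or.inr (Or.inl ⟨z1,z2,z3,y1,y2,y3,x1,x2,x3⟩))
  -- 9 (c,b,b) D2D3 b
  · exact (contra b1 b2 a1 a2 c1 c2 q2 r2
      (by linear_combination h1) (by linear_combination h2) hcB).elim
  -- 10 (a,c,c) D2D3 c
  · exact (contra c1 c2 a1 a2 b1 b2 q2 r2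
      (by linear_combination h1) (by linear_combination h2) hcC).elim
  -- 11 (a,c,a) D1D3 a
  · exact (contra a1 a2 b1 b2 c1 c2 (by linear_combination p2 - r1) r2 h1 h2 hcA).elim
  -- 12 (a,c,b) GOOD → disjunct 6
  · obtain ⟨x1,x2,x3,y1,y2,y3,z1,z2,z3⟩ := good a1 a2 a3 c1 c2 c3 b1 b2 b3
      (by linear_combination h1) (by linear_combination h2) (by linear_combination h3)
      p1 p2 q1 q2 r1 r2
    exact Or.inr (Or.inr (Or.inr (Or.inr (Or.inr ⟨x1,x2,x3,z1,z2,z3,y1,y2,y3⟩))))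
  -- 13 (a,a,c) D1D2 a
  · exact (contra a1 a2 b1 b2 c1 c2 q2 (by linear_combination q1 + p2) h1 h2 hcA).elim
  -- 14 (a,a,a) D1D2 a
  · exact (contra a1 a2 b1 b2 c1 c2 q2 (by linear_combination q1 + p2) h1 h2 hcA).elim
  -- 15 (a,a,b) D1D2 a
  · exact (contra a1 a2 b1 b2 c1 c2 q2 (by linear_combination q1 + p2) h1 h2 hcA).elim
  -- 16 (a,b,c) GOOD → disjunct 5
  · obtain ⟨x1,x2,x3,y1,y2,y3,z1,z2,z3⟩ := good a1 a2 a3 b1 b2 b3 c1 c2 c3 h1 h2 h3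
      p1 p2 q1 q2 r1 r2
    exact Or.inr (Or.inr (Or.inr (Or.inr (Or.inl ⟨x1,x2,x3,y1,y2,y3,z1,z2,z3⟩))))
  -- 17 (a,b,a) D1D3 a
  · exact (contra a1 a2 b1 b2 c1 c2 (by linear_combination p2 - r1) r2 h1 h2 hcA).elim
  -- 18 (a,b,b) D2D3 b
  · exact (contra b1 b2 a1 a2 c1 c2 q2 r2
      (by linear_combination h1) (by linear_combination h2) hcB).elim
  -- 19 (b,c,c) D2D3 c
  · exact (contra c1 c2 a1 a2 b1 b2 q2 r2
      (by linear_combination h1) (by linear_combination h2) hcC).elim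
  -- 20 (b,c,a) GOOD → disjunct 4
  · obtain ⟨x1,x2,x3,y1,y2,y3,z1,z2,z3⟩ := good b1 b2 b3 c1 c2 c3 a1 a2 a3
      (by linear_combination h1) (by linear_combination h2) (by linear_combination h3)
      p1 p2 q1 q2 r1 r2
    exact Or.inr (Or.inr (Or.inr (Or.inl ⟨z1,z2,z3,x1,x2,x3,y1,y2,y3⟩)))
  -- 21 (b,c,b) D1D3 b
  · exact (contra b1 b2 a1 a2 c1 c2 (by linear_combination p2 - r1) r2
      (by linear_combination h1) (by linear_combination h2) hcB).elim
  -- 22 (b,a,c) GOOD → disjunct 2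
  · obtain ⟨x1,x2,x3,y1,y2,y3,z1,z2,z3⟩ := good b1 b2 b3 a1 a2 a3 c1 c2 c3
      (by linear_combination h1) (by linear_combination h2) (by linear_combination h3)
      p1 p2 q1 q2 r1 r2
    exact Or.inr (Or.inl ⟨y1,y2,y3,x1,x2,x3,z1,z2,z3⟩)
  -- 23 (b,a,a) D2D3 a
  · exact (contra a1 a2 b1 b2 c1 c2 q2 r2 h1 h2 hcA).elim
  -- 24 (b,a,b) D1D3 b
  · exact (contra b1 b2 a1 a2 c1 c2 (by linear_combination p2 - r1) r2
      (by linear_combination h1) (by linear_combination h2) hcB).elim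
  -- 25 (b,b,c) D1D2 b
  · exact (contra b1 b2 a1 a2 c1 c2 q2 (by linear_combination q1 + p2)
      (by linear_combination h1) (by linear_combination h2) hcB).elim
  -- 26 (b,b,a) D1D2 b
  · exact (contra b1 b2 a1 a2 c1 c2 q2 (by linear_combination q1 + p2)
      (by linear_combination h1) (by linear_combination h2) hcB).elim
  -- 27 (b,b,b) D1D2 b
  · exact (contra b1 b2 a1 a2 c1 c2 q2 (by linear_combination q1 + p2)
      (by linear_combination h1) (by linear_combination h2) hcB).elim
lemma core (u v w : Fin 6 → ℂ)
    (hu0 : u 0 = 1) (hu1 : u 1 = 0) (hu2 : u 2 = 0)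
    (hv0 : v 0 = 0) (hv1 : v 1 = 1) (hv2 : v 2 = 0)
    (hw0 : w 0 = 0) (hw1 : w 1 = 0) (hw2 : w 2 = 1)
    (hsum : ∀ s t r : ℂ, (∑ m, (s * u m + t * v m + r * w m)) = 0)
    (hcube : ∀ s t r : ℂ, (∑ m, (s * u m + t * v m + r * w m)^3) = 0) :
    ∃ τ : Equiv.Perm (Fin 6), ((∀ i, τ (τ i) = i) ∧ ∀ i, τ i ≠ i) ∧
      ∀ m, u m + u (τ m) = 0 ∧ v m + v (τ m) = 0 ∧ w m + w (τ m) = 0 := by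
  have hl : ∀ m : Fin 6, m = 0 ∨ m = 1 ∨ m = 2 ∨ m = 3 ∨ m = 4 ∨ m = 5 := by decide
  have h1 : u 3 + u 4 + u 5 = -1 := by
    have e := hsum 1 0 0; rw [Fin.sum_univ_six] at e; linear_combination e - hu0 - hu1 - hu2
  have h2 : v 3 + v 4 + v 5 = -1 := by
    have e := hsum 0 1 0; rw [Fin.sum_univ_six] at e; linear_combination e - hv0 - hv1 - hv2
  have h3 : w 3 + w 4 + w 5 = -1 := by
    have e := hsum 0 0 1; rw [Fin.sum_univ_six] at e; linear_combination e - hw0 - hw1 - hw2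
  have hc : ∀ s t r : ℂ, s^3 + t^3 + r^3 + (u 3*s + v 3*t + w 3*r)^3
      + (u 4*s + v 4*t + w 4*r)^3 + (u 5*s + v 5*t + w 5*r)^3 = 0 := by
    intro s t r
    have e := hcube s t r; rw [Fin.sum_univ_six, hu0, hu1, hu2, hv0, hv1, hv2, hw0, hw1, hw2] at e
    linear_combination e
  have hk := key (u 3) (v 3) (w 3) (u 4) (v 4) (w 4) (u 5) (v 5) (w 5) h1 h2 h3 hc
  rcases hk with hk|hk|hk|hk|hk|hk <;> obtain ⟨x1,x2,x3,y1,y2,y3,z1,z2,z3⟩ := hk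
  · refine ⟨⟨![3,4,5,0,1,2], ![3,4,5,0,1,2], by decide, by decide⟩, ⟨by decide, by decide⟩, fun m => ?_⟩
    rcases hl m with rfl|rfl|rfl|rfl|rfl|rfl
    · exact ⟨by show u 0 + u 3 = 0; linear_combination hu0 + x1,
        by show v 0 + v 3 = 0; linear_combination hv0 + x2,
        by show w 0 + w 3 = 0; linear_combination hw0 + x3⟩
    · exact ⟨by show u 1 + u 4 = 0; linear_combination hu1 + y1,
        by show v 1 + v 4 = 0; linear_combination hv1 + y2,
        by show w 1 + w 4 = 0; linear_combination hw1 + y3⟩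
    · exact ⟨by show u 2 + u 5 = 0; linear_combination hu2 + z1,
        by show v 2 + v 5 = 0; linear_combination hv2 + z2,
        by show w 2 + w 5 = 0; linear_combination hw2 + z3⟩
    · exact ⟨by show u 3 + u 0 = 0; linear_combination hu0 + x1,
        by show v 3 + v 0 = 0; linear_combination hv0 + x2,
        by show w 3 + w 0 = 0; linear_combination hw0 + x3⟩
    · exact ⟨by show u 4 + u 1 = 0; linear_combination hu1 + y1,
        by show v 4 + v 1 = 0; linear_combination hv1 + y2,
        by show w 4 + w 1 = 0; linear_combination hw1 + y3⟩
    · exact ⟨by show u 5 + u 2 = 0; linear_combination hu2 + z1,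
        by show v 5 + v 2 = 0; linear_combination hv2 + z2,
        by show w 5 + w 2 = 0; linear_combination hw2 + z3⟩
  · refine ⟨⟨![3,5,4,0,2,1], ![3,5,4,0,2,1], by decide, by decide⟩, ⟨by decide, by decide⟩, fun m => ?_⟩
    rcases hl m with rfl|rfl|rfl|rfl|rfl|rfl
    · exact ⟨by show u 0 + u 3 = 0; linear_combination hu0 + x1,
        by show v 0 + v 3 = 0; linear_combination hv0 + x2,
        by show w 0 + w 3 = 0; linear_combination hw0 + x3⟩
    · exact ⟨by show u 1 + u 5 = 0; linear_combination hu1 + z1,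
        by show v 1 + v 5 = 0; linear_combination hv1 + z2,
        by show w 1 + w 5 = 0; linear_combination hw1 + z3⟩
    · exact ⟨by show u 2 + u 4 = 0; linear_combination hu2 + y1,
        by show v 2 + v 4 = 0; linear_combination hv2 + y2,
        by show w 2 + w 4 = 0; linear_combination hw2 + y3⟩
    · exact ⟨by show u 3 + u 0 = 0; linear_combination hu0 + x1,
        by show v 3 + v 0 = 0; linear_combination hv0 + x2,
        by show w 3 + w 0 = 0; linear_combination hw0 + x3⟩
    · exact ⟨by show u 4 + u 2 = 0; linear_combination hu2 + y1,
        by show v 4 + v 2 = 0; linear_combination hv2 + y2,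
        by show w 4 + w 2 = 0; linear_combination hw2 + y3⟩
    · exact ⟨by show u 5 + u 1 = 0; linear_combination hu1 + z1,
        by show v 5 + v 1 = 0; linear_combination hv1 + z2,
        by show w 5 + w 1 = 0; linear_combination hw1 + z3⟩
  · refine ⟨⟨![4,3,5,1,0,2], ![4,3,5,1,0,2], by decide, by decide⟩, ⟨by decide, by decide⟩, fun m => ?_⟩
    rcases hl m with rfl|rfl|rfl|rfl|rfl|rfl
    · exact ⟨by show u 0 + u 4 = 0; linear_combination hu0 + y1,
        by show v 0 + v 4 = 0; linear_combination hv0 + y2,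
        by show w 0 + w 4 = 0; linear_combination hw0 + y3⟩
    · exact ⟨by show u 1 + u 3 = 0; linear_combination hu1 + x1,
        by show v 1 + v 3 = 0; linear_combination hv1 + x2,
        by show w 1 + w 3 = 0; linear_combination hw1 + x3⟩
    · exact ⟨by show u 2 + u 5 = 0; linear_combination hu2 + z1,
        by show v 2 + v 5 = 0; linear_combination hv2 + z2,
        by show w 2 + w 5 = 0; linear_combination hw2 + z3⟩
    · exact ⟨by show u 3 + u 1 = 0; linear_combination hu1 + x1,
        by show v 3 + v 1 = 0; linear_combination hv1 + x2,
        by show w 3 + w 1 = 0; linear_combination hw1 + x3⟩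
    · exact ⟨by show u 4 + u 0 = 0; linear_combination hu0 + y1,
        by show v 4 + v 0 = 0; linear_combination hv0 + y2,
        by show w 4 + w 0 = 0; linear_combination hw0 + y3⟩
    · exact ⟨by show u 5 + u 2 = 0; linear_combination hu2 + z1,
        by show v 5 + v 2 = 0; linear_combination hv2 + z2,
        by show w 5 + w 2 = 0; linear_combination hw2 + z3⟩
  · refine ⟨⟨![5,3,4,1,2,0], ![5,3,4,1,2,0], by decide, by decide⟩, ⟨by decide, by decide⟩, fun m => ?_⟩
    rcases hl m with rfl|rfl|rfl|rfl|rfl|rfl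
    · exact ⟨by show u 0 + u 5 = 0; linear_combination hu0 + z1,
        by show v 0 + v 5 = 0; linear_combination hv0 + z2,
        by show w 0 + w 5 = 0; linear_combination hw0 + z3⟩
    · exact ⟨by show u 1 + u 3 = 0; linear_combination hu1 + x1,
        by show v 1 + v 3 = 0; linear_combination hv1 + x2,
        by show w 1 + w 3 = 0; linear_combination hw1 + x3⟩
    · exact ⟨by show u 2 + u 4 = 0; linear_combination hu2 + y1,
        by show v 2 + v 4 = 0; linear_combination hv2 + y2,
        by show w 2 + w 4 = 0; linear_combination hw2 + y3⟩
    · exact ⟨by show u 3 + u 1 = 0; linear_combination hu1 + x1,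
        by show v 3 + v 1 = 0; linear_combination hv1 + x2,
        by show w 3 + w 1 = 0; linear_combination hw1 + x3⟩
    · exact ⟨by show u 4 + u 2 = 0; linear_combination hu2 + y1,
        by show v 4 + v 2 = 0; linear_combination hv2 + y2,
        by show w 4 + w 2 = 0; linear_combination hw2 + y3⟩
    · exact ⟨by show u 5 + u 0 = 0; linear_combination hu0 + z1,
        by show v 5 + v 0 = 0; linear_combination hv0 + z2,
        by show w 5 + w 0 = 0; linear_combination hw0 + z3⟩
  · refine ⟨⟨![4,5,3,2,0,1], ![4,5,3,2,0,1], by decide, by decide⟩, ⟨by decide, by decide⟩, fun m => ?_⟩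
    rcases hl m with rfl|rfl|rfl|rfl|rfl|rfl
    · exact ⟨by show u 0 + u 4 = 0; linear_combination hu0 + y1,
        by show v 0 + v 4 = 0; linear_combination hv0 + y2,
        by show w 0 + w 4 = 0; linear_combination hw0 + y3⟩
    · exact ⟨by show u 1 + u 5 = 0; linear_combination hu1 + z1,
        by show v 1 + v 5 = 0; linear_combination hv1 + z2,
        by show w 1 + w 5 = 0; linear_combination hw1 + z3⟩
    · exact ⟨by show u 2 + u 3 = 0; linear_combination hu2 + x1,
        by show v 2 + v 3 = 0; linear_combination hv2 + x2,
        by show w 2 + w 3 = 0; linear_combination hw2 + x3⟩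
    · exact ⟨by show u 3 + u 2 = 0; linear_combination hu2 + x1,
        by show v 3 + v 2 = 0; linear_combination hv2 + x2,
        by show w 3 + w 2 = 0; linear_combination hw2 + x3⟩
    · exact ⟨by show u 4 + u 0 = 0; linear_combination hu0 + y1,
        by show v 4 + v 0 = 0; linear_combination hv0 + y2,
        by show w 4 + w 0 = 0; linear_combination hw0 + y3⟩
    · exact ⟨by show u 5 + u 1 = 0; linear_combination hu1 + z1,
        by show v 5 + v 1 = 0; linear_combination hv1 + z2,
        by show w 5 + w 1 = 0; linear_combination hw1 + z3⟩
  · refine ⟨⟨![5,4,3,2,1,0], ![5,4,3,2,1,0], by decide, by decide⟩, ⟨by decide, by decide⟩, fun m => ?_⟩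
    rcases hl m with rfl|rfl|rfl|rfl|rfl|rfl
    · exact ⟨by show u 0 + u 5 = 0; linear_combination hu0 + z1,
        by show v 0 + v 5 = 0; linear_combination hv0 + z2,
        by show w 0 + w 5 = 0; linear_combination hw0 + z3⟩
    · exact ⟨by show u 1 + u 4 = 0; linear_combination hu1 + y1,
        by show v 1 + v 4 = 0; linear_combination hv1 + y2,
        by show w 1 + w 4 = 0; linear_combination hw1 + y3⟩
    · exact ⟨by show u 2 + u 3 = 0; linear_combination hu2 + x1,
        by show v 2 + v 3 = 0; linear_combination hv2 + x2,
        by show w 2 + w 3 = 0; linear_combination hw2 + x3⟩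
    · exact ⟨by show u 3 + u 2 = 0; linear_combination hu2 + x1,
        by show v 3 + v 2 = 0; linear_combination hv2 + x2,
        by show w 3 + w 2 = 0; linear_combination hw2 + x3⟩
    · exact ⟨by show u 4 + u 1 = 0; linear_combination hu1 + y1,
        by show v 4 + v 1 = 0; linear_combination hv1 + y2,
        by show w 4 + w 1 = 0; linear_combination hw1 + y3⟩
    · exact ⟨by show u 5 + u 0 = 0; linear_combination hu0 + z1,
        by show v 5 + v 0 = 0; linear_combination hv0 + z2,
        by show w 5 + w 0 = 0; linear_combination hw0 + z3⟩

noncomputable def proj2 (τ : Equiv.Perm (Fin 6)) : (Fin 6 → ℂ) →ₗ[ℂ] (Fin 6 → ℂ) where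
  toFun x := fun i => (x i + x (τ i)) / 2
  map_add' x y := by funext i; simp only [Pi.add_apply]; ring
  map_smul' c x := by funext i; simp only [Pi.smul_apply, smul_eq_mul, RingHom.id_apply]; ring

lemma finrank_segrePlane (τ : Equiv.Perm (Fin 6)) (h2 : ∀ i, τ (τ i) = i) (hf : ∀ i, τ i ≠ i) :
    Module.finrank ℂ (segrePlane τ) = 3 := by
  set π := proj2 τ with hπ
  have hidem : ∀ x, π (π x) = π x := by
    intro x; funext i
    simp only [π, proj2, LinearMap.coe_mk, AddHom.coe_mk, hπ]
    rw [h2 i]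
    ring
  have hproj : LinearMap.IsProj (LinearMap.range π) π := by
    constructor
    · intro x; exact LinearMap.mem_range_self π x
    · rintro x ⟨y, rfl⟩; exact hidem y
  have htr := hproj.trace
  have htr2 : LinearMap.trace ℂ (Fin 6 → ℂ) π = 3 := by
    rw [LinearMap.trace_eq_matrix_trace ℂ (Pi.basisFun ℂ (Fin 6)) π]
    rw [Matrix.trace]
    have hdiag : ∀ m, (LinearMap.toMatrix (Pi.basisFun ℂ (Fin 6)) (Pi.basisFun ℂ (Fin 6)) π).diag m
        = 1/2 := by
      intro m
      rw [Matrix.diag_apply, LinearMap.toMatrix_apply]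
      simp only [Pi.basisFun_apply, Pi.basisFun_repr]
      show ((Pi.single m 1 : Fin 6 → ℂ) m + (Pi.single m 1 : Fin 6 → ℂ) (τ m)) / 2 = 1/2
      rw [Pi.single_eq_same, Pi.single_eq_of_ne (hf m)]
      norm_num
    rw [Finset.sum_congr rfl (fun m _ => hdiag m)]
    simp
    norm_num
  have hrank : Module.finrank ℂ (LinearMap.range π) = 3 := by
    have : ((Module.finrank ℂ (LinearMap.range π) : ℂ)) = ((3:ℕ) : ℂ) := by
      rw [← htr, htr2]; norm_num
    exact_mod_cast this
  have hker : LinearMap.ker π = segrePlane τ := by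
    ext x
    constructor
    · intro hx i
      have := congrFun (LinearMap.mem_ker.mp hx) i
      simp only [π, proj2, LinearMap.coe_mk, AddHom.coe_mk, Pi.zero_apply] at this
      field_simp at this
      linear_combination this
    · intro hx
      apply LinearMap.mem_ker.mpr
      funext i
      simp only [π, proj2, LinearMap.coe_mk, AddHom.coe_mk, Pi.zero_apply]
      rw [hx i]; norm_num
  have hrn := LinearMap.finrank_range_add_finrank_ker π
  rw [hker, hrank] at hrn
  have h6 : Module.finrank ℂ (Fin 6 → ℂ) = 6 := by
    simp [Module.finrank_fintype_fun_eq_card]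
  omega

lemma segre_sums (τ : Equiv.Perm (Fin 6)) (x : Fin 6 → ℂ) (hx : ∀ i, x i + x (τ i) = 0) :
    ((∑ k, x k) = 0 ∧ (∑ k, (x k)^3) = 0) := by
  have hneg : ∀ k, x (τ k) = - x k := fun k => by linear_combination hx k
  constructor
  · have h1 : ∑ k, x (τ k) = ∑ k, x k := Equiv.sum_comp τ (fun k => x k)
    have h2 : ∑ k, x (τ k) = - ∑ k, x k := by
      rw [Finset.sum_congr rfl (fun k _ => hneg k)]
      exact Finset.sum_neg_distrib _
    have := h1.symm.trans h2
    linear_combination this / 2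
  · have h1 : ∑ k, (x (τ k))^3 = ∑ k, (x k)^3 := Equiv.sum_comp τ (fun k => (x k)^3)
    have h2 : ∑ k, (x (τ k))^3 = - ∑ k, (x k)^3 := by
      rw [Finset.sum_congr rfl (fun k _ => show (x (τ k))^3 = -((x k)^3) by rw [hneg k]; ring)]
      exact Finset.sum_neg_distrib _
    have := h1.symm.trans h2
    linear_combination this / 2


lemma exists_normalized (V : Submodule ℂ (Fin 6 → ℂ)) (hr : Module.finrank ℂ V = 3) :
    ∃ (i j k : Fin 6) (u v w : Fin 6 → ℂ), u ∈ V ∧ v ∈ V ∧ w ∈ V ∧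
      i ≠ j ∧ i ≠ k ∧ j ≠ k ∧
      u i = 1 ∧ u j = 0 ∧ u k = 0 ∧ v i = 0 ∧ v j = 1 ∧ v k = 0 ∧
      w i = 0 ∧ w j = 0 ∧ w k = 1 ∧
      V ≤ Submodule.span ℂ (Set.range ![u, v, w]) := by
  have hVne : V ≠ ⊥ := by
    intro h; rw [h, finrank_bot] at hr; omega
  obtain ⟨u₀, hu₀V, hu₀⟩ := Submodule.ne_bot_iff V |>.mp hVne
  have : ∃ i, u₀ i ≠ 0 := by
    by_contra hc; push_neg at hc; exact hu₀ (funext hc)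
  obtain ⟨i, hi⟩ := this
  -- second vector
  set φ : V →ₗ[ℂ] ℂ := (LinearMap.proj i).comp V.subtype with hφdef
  have hker1 : 2 ≤ finrank ℂ (LinearMap.ker φ) := by
    have h1 := LinearMap.finrank_range_add_finrank_ker φ
    have h2 : finrank ℂ (LinearMap.range φ) ≤ 1 := by
      have := Submodule.finrank_le (LinearMap.range φ)
      rwa [finrank_self] at this
    rw [hr] at h1; omega
  have hkerne : LinearMap.ker φ ≠ ⊥ := by
    intro h; rw [h, finrank_bot] at hker1; omega
  obtain ⟨v₀, hv₀ker, hv₀⟩ := Submodule.ne_bot_iff _ |>.mp hkerne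
  have hv₀i : (v₀ : Fin 6 → ℂ) i = 0 := LinearMap.mem_ker.mp hv₀ker
  have : ∃ j, (v₀ : Fin 6 → ℂ) j ≠ 0 := by
    by_contra hc; push_neg at hc
    exact hv₀ (by ext1; exact funext hc)
  obtain ⟨j, hj⟩ := this
  have hij : i ≠ j := by intro h; rw [h] at hv₀i; exact hj hv₀i
  -- third vector
  set ψ : V →ₗ[ℂ] (ℂ × ℂ) :=
    LinearMap.prod ((LinearMap.proj i).comp V.subtype) ((LinearMap.proj j).comp V.subtype) with hψdef
  have hker2 : 1 ≤ finrank ℂ (LinearMap.ker ψ) := by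
    have h1 := LinearMap.finrank_range_add_finrank_ker ψ
    have h2 : finrank ℂ (LinearMap.range ψ) ≤ 2 := by
      have := Submodule.finrank_le (LinearMap.range ψ)
      rwa [show finrank ℂ (ℂ × ℂ) = 2 by simp] at this
    rw [hr] at h1; omega
  have hkerne2 : LinearMap.ker ψ ≠ ⊥ := by
    intro h; rw [h, finrank_bot] at hker2; omega
  obtain ⟨w₀, hw₀ker, hw₀⟩ := Submodule.ne_bot_iff _ |>.mp hkerne2
  have hw₀ij : (w₀ : Fin 6 → ℂ) i = 0 ∧ (w₀ : Fin 6 → ℂ) j = 0 := by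
    have := LinearMap.mem_ker.mp hw₀ker
    exact ⟨congrArg Prod.fst this, congrArg Prod.snd this⟩
  have : ∃ k, (w₀ : Fin 6 → ℂ) k ≠ 0 := by
    by_contra hc; push_neg at hc
    exact hw₀ (by ext1; exact funext hc)
  obtain ⟨k, hk⟩ := this
  have hik : i ≠ k := by intro h; rw [h] at hw₀ij; exact hk hw₀ij.1
  have hjk : j ≠ k := by intro h; rw [h] at hw₀ij; exact hk hw₀ij.2
  -- normalize
  set ww : Fin 6 → ℂ := ((w₀ : Fin 6 → ℂ) k)⁻¹ • (w₀ : Fin 6 → ℂ) with hwwdef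
  set vv : Fin 6 → ℂ := ((v₀ : Fin 6 → ℂ) j)⁻¹ • (v₀ : Fin 6 → ℂ) with hvvdef
  set uu : Fin 6 → ℂ := (u₀ i)⁻¹ • u₀ with huudef
  have hwwV : ww ∈ V := V.smul_mem _ w₀.2
  have hvvV : vv ∈ V := V.smul_mem _ v₀.2
  have huuV : uu ∈ V := V.smul_mem _ hu₀V
  have hwk : ww k = 1 := by
    simp only [hwwdef, Pi.smul_apply, smul_eq_mul]; exact inv_mul_cancel₀ hk
  have hwi : ww i = 0 := by
    simp only [hwwdef, Pi.smul_apply, smul_eq_mul, hw₀ij.1, mul_zero]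
  have hwj : ww j = 0 := by
    simp only [hwwdef, Pi.smul_apply, smul_eq_mul, hw₀ij.2, mul_zero]
  have hvj : vv j = 1 := by
    simp only [hvvdef, Pi.smul_apply, smul_eq_mul]; exact inv_mul_cancel₀ hj
  have hvi : vv i = 0 := by
    simp only [hvvdef, Pi.smul_apply, smul_eq_mul, hv₀i, mul_zero]
  have hui : uu i = 1 := by
    simp only [huudef, Pi.smul_apply, smul_eq_mul]; exact inv_mul_cancel₀ hi
  -- Gram-Schmidt
  set v2 : Fin 6 → ℂ := vv - vv k • ww with hv2def
  set u2 : Fin 6 → ℂ := uu - uu j • v2 - uu k • ww with hu2def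
  have hv2V : v2 ∈ V := V.sub_mem hvvV (V.smul_mem _ hwwV)
  have hu2V : u2 ∈ V := V.sub_mem (V.sub_mem huuV (V.smul_mem _ hv2V)) (V.smul_mem _ hwwV)
  have hv2i : v2 i = 0 := by
    simp only [hv2def, Pi.sub_apply, Pi.smul_apply, smul_eq_mul, hvi, hwi]; ring
  have hv2j : v2 j = 1 := by
    simp only [hv2def, Pi.sub_apply, Pi.smul_apply, smul_eq_mul, hvj, hwj]; ring
  have hv2k : v2 k = 0 := by
    simp only [hv2def, Pi.sub_apply, Pi.smul_apply, smul_eq_mul, hwk]; ring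
  have hu2i : u2 i = 1 := by
    simp only [hu2def, Pi.sub_apply, Pi.smul_apply, smul_eq_mul, hui, hv2i, hwi]; ring
  have hu2j : u2 j = 0 := by
    simp only [hu2def, Pi.sub_apply, Pi.smul_apply, smul_eq_mul, hv2j, hwj]; ring
  have hu2k : u2 k = 0 := by
    simp only [hu2def, Pi.sub_apply, Pi.smul_apply, smul_eq_mul, hv2k, hwk]; ring
  -- linear independence
  have hli : LinearIndependent ℂ ![u2, v2, ww] := by
    rw [Fintype.linearIndependent_iff]
    intro g hg
    rw [Fin.sum_univ_three] at hg
    simp only [Matrix.cons_val_zero, Matrix.cons_val_one, Matrix.head_cons,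
      Matrix.cons_val_two, Matrix.tail_cons] at hg
    have e0 := congrFun hg i
    have e1 := congrFun hg j
    have e2 := congrFun hg k
    simp only [Pi.add_apply, Pi.smul_apply, smul_eq_mul, Pi.zero_apply,
      hu2i, hu2j, hu2k, hv2i, hv2j, hv2k, hwi, hwj, hwk] at e0 e1 e2
    have hg0 : g 0 = 0 := by linear_combination e0
    have hg1 : g 1 = 0 := by linear_combination e1
    have hg2 : g 2 = 0 := by linear_combination e2
    intro m; fin_cases m <;> assumption
  have hsub : Submodule.span ℂ (Set.range ![u2, v2, ww]) ≤ V := by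
    rw [Submodule.span_le]
    rintro x ⟨m, rfl⟩
    fin_cases m <;> simpa using (by assumption : _ ∈ V)
  have heq : Submodule.span ℂ (Set.range ![u2, v2, ww]) = V := by
    apply Submodule.eq_of_le_of_finrank_le hsub
    rw [hr, finrank_span_eq_card hli]
    simp
  exact ⟨i, j, k, u2, v2, ww, hu2V, hv2V, hwwV, hij, hik, hjk,
    hu2i, hu2j, hu2k, hv2i, hv2j, hv2k, hwi, hwj, hwk, heq.symm.le⟩

lemma plane_uniq (τ1 τ2 : Equiv.Perm (Fin 6)) (h21 : ∀ i, τ1 (τ1 i) = i)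
    (hf1 : ∀ i, τ1 i ≠ i) (hle : segrePlane τ1 ≤ segrePlane τ2) : τ2 = τ1 := by
  apply Equiv.ext
  intro n
  set x : Fin 6 → ℂ := fun m => if m = n then 1 else if m = τ1 n then -1 else 0 with hxdef
  have hx : x ∈ segrePlane τ1 := by
    intro i2
    show x i2 + x (τ1 i2) = 0
    simp only [hxdef]
    by_cases h1 : i2 = n
    · subst h1
      rw [if_pos rfl, if_neg (hf1 i2), if_pos rfl]
      ring
    · by_cases h2 : i2 = τ1 n
      · subst h2
        rw [if_neg (hf1 n), if_pos rfl, h21 n, if_pos rfl]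
        ring
      · have h3 : τ1 i2 ≠ n := by
          intro hc
          exact h2 (by rw [← h21 i2, hc])
        have h4 : τ1 i2 ≠ τ1 n := fun hc => h1 (τ1.injective hc)
        rw [if_neg h1, if_neg h2, if_neg h3, if_neg h4]
        ring
  have h := hle hx n
  have hxn : x n = 1 := by simp [hxdef]
  rw [hxn] at h
  by_cases e1 : τ2 n = n
  · rw [e1, hxn] at h
    norm_num at h
  · by_cases e2 : τ2 n = τ1 n
    · exact e2
    · have hz : x (τ2 n) = 0 := by
        simp only [hxdef]
        rw [if_neg e1, if_neg e2]
      rw [hz] at h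
      norm_num at h

lemma segre_part1 (V : Submodule ℂ (Fin 6 → ℂ)) (hr : Module.finrank ℂ V = 3)
    (hV : ∀ x ∈ V, (∑ k, x k) = 0 ∧ (∑ k, (x k) ^ 3) = 0) :
    ∃ τ : Equiv.Perm (Fin 6), ((∀ i, τ (τ i) = i) ∧ ∀ i, τ i ≠ i) ∧ V = segrePlane τ := by
  obtain ⟨i, j, k, u, v, w, huV, hvV, hwV, hij, hik, hjk, hui, huj, huk,
    hvi, hvj, hvk, hwi, hwj, hwk, hspan⟩ := exists_normalized V hr
  -- a permutation ρ with ρ 0 = i, ρ 1 = j, ρ 2 = k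
  have hcard : ({i, j, k}ᶜ : Finset (Fin 6)).card = 3 := by
    rw [Finset.card_compl]
    rw [show ({i, j, k} : Finset (Fin 6)).card = 3 by
      rw [Finset.card_insert_of_notMem (by simp [hij, hik]),
        Finset.card_insert_of_notMem (by simp [hjk]), Finset.card_singleton]]
    decide
  obtain ⟨p, q, r, hpq, hpr, hqr, hcset⟩ := Finset.card_eq_three.mp hcard
  have hpmem : p ∉ ({i, j, k} : Finset (Fin 6)) := by
    rw [← Finset.mem_compl, hcset]; simp
  have hqmem : q ∉ ({i, j, k} : Finset (Fin 6)) := by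
    rw [← Finset.mem_compl, hcset]; simp
  have hrmem : r ∉ ({i, j, k} : Finset (Fin 6)) := by
    rw [← Finset.mem_compl, hcset]; simp
  simp only [Finset.mem_insert, Finset.mem_singleton, not_or] at hpmem hqmem hrmem
  obtain ⟨hpi, hpj, hpk⟩ := hpmem
  obtain ⟨hqi, hqj, hqk⟩ := hqmem
  obtain ⟨hri, hrj, hrk⟩ := hrmem
  have hl6 : ∀ m : Fin 6, m = 0 ∨ m = 1 ∨ m = 2 ∨ m = 3 ∨ m = 4 ∨ m = 5 := by decide
  have hinj : Function.Injective ![i, j, k, p, q, r] := by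
    intro a b hab
    rcases hl6 a with rfl|rfl|rfl|rfl|rfl|rfl <;> rcases hl6 b with rfl|rfl|rfl|rfl|rfl|rfl
    · rfl
    · exact absurd hab hij
    · exact absurd hab hik
    · exact absurd hab (fun h => hpi h.symm)
    · exact absurd hab (fun h => hqi h.symm)
    · exact absurd hab (fun h => hri h.symm)
    · exact absurd hab (fun h => hij h.symm)
    · rfl
    · exact absurd hab hjk
    · exact absurd hab (fun h => hpj h.symm)
    · exact absurd hab (fun h => hqj h.symm)
    · exact absurd hab (fun h => hrj h.symm)
    · exact absurd hab (fun h => hik h.symm)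
    · exact absurd hab (fun h => hjk h.symm)
    · rfl
    · exact absurd hab (fun h => hpk h.symm)
    · exact absurd hab (fun h => hqk h.symm)
    · exact absurd hab (fun h => hrk h.symm)
    · exact absurd hab hpi
    · exact absurd hab hpj
    · exact absurd hab hpk
    · rfl
    · exact absurd hab hpq
    · exact absurd hab hpr
    · exact absurd hab hqi
    · exact absurd hab hqj
    · exact absurd hab hqk
    · exact absurd hab (fun h => hpq h.symm)
    · rfl
    · exact absurd hab hqr
    · exact absurd hab hri
    · exact absurd hab hrj
    · exact absurd hab hrk
    · exact absurd hab (fun h => hpr h.symm)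
    · exact absurd hab (fun h => hqr h.symm)
    · rfl
  set ρ : Equiv.Perm (Fin 6) := Equiv.ofBijective _ (Finite.injective_iff_bijective.mp hinj)
    with hρdef
  have hρ0 : ρ 0 = i := rfl
  have hρ1 : ρ 1 = j := rfl
  have hρ2 : ρ 2 = k := rfl
  -- transported generators
  set u' : Fin 6 → ℂ := fun m => u (ρ m) with hu'def
  set v' : Fin 6 → ℂ := fun m => v (ρ m) with hv'def
  set w' : Fin 6 → ℂ := fun m => w (ρ m) with hw'def
  have hmem : ∀ s t r' : ℂ, s • u + t • v + r' • w ∈ V := fun s t r' =>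
    V.add_mem (V.add_mem (V.smul_mem s huV) (V.smul_mem t hvV)) (V.smul_mem r' hwV)
  have hsum' : ∀ s t r' : ℂ, (∑ m, (s * u' m + t * v' m + r' * w' m)) = 0 := by
    intro s t r'
    have h := (hV _ (hmem s t r')).1
    simp only [Pi.add_apply, Pi.smul_apply, smul_eq_mul] at h
    calc (∑ m, (s * u' m + t * v' m + r' * w' m))
        = ∑ m, (s * u (ρ m) + t * v (ρ m) + r' * w (ρ m)) := rfl
      _ = ∑ n, (s * u n + t * v n + r' * w n) :=
          Equiv.sum_comp ρ (fun n => s * u n + t * v n + r' * w n)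
      _ = 0 := h
  have hcube' : ∀ s t r' : ℂ, (∑ m, (s * u' m + t * v' m + r' * w' m) ^ 3) = 0 := by
    intro s t r'
    have h := (hV _ (hmem s t r')).2
    simp only [Pi.add_apply, Pi.smul_apply, smul_eq_mul] at h
    calc (∑ m, (s * u' m + t * v' m + r' * w' m) ^ 3)
        = ∑ m, (s * u (ρ m) + t * v (ρ m) + r' * w (ρ m)) ^ 3 := rfl
      _ = ∑ n, (s * u n + t * v n + r' * w n) ^ 3 :=
          Equiv.sum_comp ρ (fun n => (s * u n + t * v n + r' * w n) ^ 3)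
      _ = 0 := h
  have hu'0 : u' 0 = 1 := by rw [hu'def]; simp only [hρ0]; exact hui
  have hu'1 : u' 1 = 0 := by rw [hu'def]; simp only [hρ1]; exact huj
  have hu'2 : u' 2 = 0 := by rw [hu'def]; simp only [hρ2]; exact huk
  have hv'0 : v' 0 = 0 := by rw [hv'def]; simp only [hρ0]; exact hvi
  have hv'1 : v' 1 = 1 := by rw [hv'def]; simp only [hρ1]; exact hvj
  have hv'2 : v' 2 = 0 := by rw [hv'def]; simp only [hρ2]; exact hvk
  have hw'0 : w' 0 = 0 := by rw [hw'def]; simp only [hρ0]; exact hwi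
  have hw'1 : w' 1 = 0 := by rw [hw'def]; simp only [hρ1]; exact hwj
  have hw'2 : w' 2 = 1 := by rw [hw'def]; simp only [hρ2]; exact hwk
  obtain ⟨τ', ⟨hτ'2, hτ'f⟩, hpair⟩ := core u' v' w' hu'0 hu'1 hu'2 hv'0 hv'1 hv'2
    hw'0 hw'1 hw'2 hsum' hcube'
  refine ⟨ρ * τ' * ρ⁻¹, ⟨?_, ?_⟩, ?_⟩
  · intro n
    simp only [Equiv.Perm.mul_apply]
    rw [show ρ⁻¹ (ρ (τ' (ρ⁻¹ n))) = τ' (ρ⁻¹ n) from ρ.symm_apply_apply _,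
      hτ'2, show ρ (ρ⁻¹ n) = n from ρ.apply_symm_apply n]
  · intro n hn
    simp only [Equiv.Perm.mul_apply] at hn
    have := congrArg ρ.symm hn
    rw [ρ.symm_apply_apply] at this
    exact hτ'f (ρ⁻¹ n) this
  · -- V = segrePlane (ρ * τ' * ρ⁻¹)
    have hle : V ≤ segrePlane (ρ * τ' * ρ⁻¹) := by
      intro x hx
      intro n
      have hx' := hspan hx
      rw [Submodule.mem_span_range_iff_exists_fun] at hx'
      obtain ⟨c, hc⟩ := hx'
      rw [Fin.sum_univ_three] at hc
      simp only [Matrix.cons_val_zero, Matrix.cons_val_one, Matrix.head_cons,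
        Matrix.cons_val_two, Matrix.tail_cons] at hc
      obtain ⟨e1, e2, e3⟩ := hpair (ρ⁻¹ n)
      rw [hu'def] at e1
      rw [hv'def] at e2
      rw [hw'def] at e3
      simp only [show ρ (ρ⁻¹ n) = n from ρ.apply_symm_apply n] at e1 e2 e3
      have hxn := congrFun hc n
      have hxτ := congrFun hc (ρ (τ' (ρ⁻¹ n)))
      simp only [Pi.add_apply, Pi.smul_apply, smul_eq_mul] at hxn hxτ
      show x n + x ((ρ * τ' * ρ⁻¹) n) = 0
      simp only [Equiv.Perm.mul_apply]
      linear_combination (- hxn) - hxτ + c 0 * e1 + c 1 * e2 + c 2 * e3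
    have hfr : Module.finrank ℂ (segrePlane (ρ * τ' * ρ⁻¹)) ≤ Module.finrank ℂ V := by
      rw [hr, finrank_segrePlane (ρ * τ' * ρ⁻¹)]
      · intro n
        simp only [Equiv.Perm.mul_apply]
        rw [show ρ⁻¹ (ρ (τ' (ρ⁻¹ n))) = τ' (ρ⁻¹ n) from ρ.symm_apply_apply _,
          hτ'2, show ρ (ρ⁻¹ n) = n from ρ.apply_symm_apply n]
      · intro n hn
        simp only [Equiv.Perm.mul_apply] at hn
        have := congrArg ρ.symm hn
        rw [ρ.symm_apply_apply] at this
        exact hτ'f (ρ⁻¹ n) this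
    exact Submodule.eq_of_le_of_finrank_le hle hfr

end SegreAux

/-- Every 3-dimensional linear subspace of `ℂ⁶` on which `∑ x_k` and
`∑ x_k³` vanish identically is `P_τ` for a unique fixed-point-free involution `τ`;
equivalently, the Segre cubic contains exactly 15 planes, the Segre planes. -/

theorem segre_cubic_planes_classification :
    (∀ V : Submodule ℂ (Fin 6 → ℂ), Module.finrank ℂ V = 3 →
      (∀ x ∈ V, (∑ k, x k) = 0 ∧ (∑ k, (x k) ^ 3) = 0) →
      ∃! τ : Equiv.Perm (Fin 6), FPF τ ∧ V = segrePlane τ) ∧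
    {V : Submodule ℂ (Fin 6 → ℂ) | Module.finrank ℂ V = 3 ∧
      ∀ x ∈ V, (∑ k, x k) = 0 ∧ (∑ k, (x k) ^ 3) = 0}.ncard = 15 := by
  have huniq : ∀ V : Submodule ℂ (Fin 6 → ℂ), Module.finrank ℂ V = 3 →
      (∀ x ∈ V, (∑ k, x k) = 0 ∧ (∑ k, (x k) ^ 3) = 0) →
      ∃! τ : Equiv.Perm (Fin 6), FPF τ ∧ V = segrePlane τ := by
    intro V hr hV
    obtain ⟨τ, hτ, heq⟩ := segre_part1 V hr hV
    refine ⟨τ, ⟨⟨hτ.1, hτ.2⟩, heq⟩, ?_⟩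
    rintro τ₂ ⟨hτ₂, heq₂⟩
    exact plane_uniq τ τ₂ hτ.1 hτ.2 (le_of_eq (heq.symm.trans heq₂))
  refine ⟨huniq, ?_⟩
  have hset : {V : Submodule ℂ (Fin 6 → ℂ) | Module.finrank ℂ V = 3 ∧
      ∀ x ∈ V, (∑ k, x k) = 0 ∧ (∑ k, (x k) ^ 3) = 0}
      = segrePlane '' {τ | FPF τ} := by
    apply Set.eq_of_subset_of_subset
    · rintro V ⟨hr, hV⟩
      obtain ⟨τ, ⟨hτ, heq⟩, _⟩ := huniq V hr hV
      exact ⟨τ, hτ, heq.symm⟩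
    · rintro _ ⟨τ, hτ, rfl⟩
      refine ⟨finrank_segrePlane τ hτ.1 hτ.2, fun x hx => segre_sums τ x hx⟩
  rw [hset]
  rw [Set.ncard_image_of_injOn (by
    rintro τ₁ h₁ τ₂ h₂ heq
    exact (plane_uniq τ₁ τ₂ h₁.1 h₁.2 heq.le).symm)]
  have hTset : {τ : Equiv.Perm (Fin 6) | FPF τ} =
      ↑(Finset.univ.filter (fun τ : Equiv.Perm (Fin 6) => (∀ i, τ (τ i) = i) ∧ ∀ i, τ i ≠ i)) := by
    ext τ
    simp [FPF]
  rw [hTset, Set.ncard_coe_finset]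
  decide
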